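/- Under assumptions (f₁)–(f₄), every Palais–Smale sequence (u_n) ⊂ 𝒩 for Φ (i.e., sup Φ(u_n) < ∞, Φ′(u_n) → 0) is bounded in H¹₀(Ω). -/

import Mathlib

open MeasureTheory intervalIntegral Set Filter Topology

lemma phi_pos {φ : ℝ → ℝ} (hpos : ∀ s : ℝ, s ≠ 0 → 0 < φ s / s ^ 3)
    {s : ℝ} (hs : 0 < s) : 0 < φ s := by
  have h := hpos s hs.ne'
  have h3 : (0:ℝ) < s ^ 3 := by positivity
  have h2 := mul_pos h h3
  rwa [div_mul_cancel₀ _ (pow_ne_zero 3 hs.ne')] at h2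

lemma cube_neg {s : ℝ} (hs : s < 0) : s ^ 3 < 0 := by
  have h : s * s * s < 0 := mul_neg_of_pos_of_neg (mul_pos_of_neg_of_neg hs hs) hs
  calc s ^ 3 = s * s * s := by ring
  _ < 0 := h

lemma phi_neg {φ : ℝ → ℝ} (hpos : ∀ s : ℝ, s ≠ 0 → 0 < φ s / s ^ 3)
    {s : ℝ} (hs : s < 0) : φ s < 0 := by
  have h := hpos s hs.ne
  have h2 := mul_neg_of_pos_of_neg h (cube_neg hs)
  rwa [div_mul_cancel₀ _ (pow_ne_zero 3 hs.ne)] at h2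

lemma F_nonneg {φ : ℝ → ℝ}
    (hpos : ∀ s : ℝ, s ≠ 0 → 0 < φ s / s ^ 3) (hφ0 : φ 0 = 0) (v : ℝ) :
    0 ≤ ∫ s in (0:ℝ)..v, φ s := by
  rcases le_or_gt 0 v with hv | hv
  · refine intervalIntegral.integral_nonneg hv fun s hs => ?_
    rcases eq_or_lt_of_le hs.1 with h | h
    · simp [← h, hφ0]
    · exact (phi_pos hpos h).le
  · rw [integral_symm]
    have h0 : 0 ≤ ∫ s in v..(0:ℝ), (fun s => -φ s) s := by
      refine intervalIntegral.integral_nonneg hv.le (fun s hs => ?_)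
      rcases eq_or_lt_of_le hs.2 with h | h
      · simp [h, hφ0]
      · simp only [neg_nonneg]; exact (phi_neg hpos h).le
    rw [intervalIntegral.integral_neg] at h0
    linarith

lemma key_ineq {φ : ℝ → ℝ} (hcont : Continuous φ) (hφ0 : φ 0 = 0)
    (hmono : MonotoneOn (fun s => φ s / s ^ 3) (Set.Ioi (0:ℝ)))
    (hanti : AntitoneOn (fun s => φ s / s ^ 3) (Set.Iio (0:ℝ)))
    (w : ℝ) : 4 * (∫ s in (0:ℝ)..w, φ s) ≤ w * φ w := by
  rcases lt_trichotomy w 0 with hw | hw | hw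
  · -- w < 0
    have hw3 : w ^ 3 < 0 := cube_neg hw
    have hle : ∀ s ∈ Icc w (0:ℝ), φ w / w ^ 3 * s ^ 3 ≤ φ s := by
      intro s hs
      rcases eq_or_lt_of_le hs.2 with h | h
      · simp [h, hφ0]
      · have hsw : s ^ 3 < 0 := cube_neg h
        have := hanti (mem_Iio.mpr hw) (mem_Iio.mpr h) hs.1
        -- φ s / s^3 ≤ φ w / w^3, multiply by s^3 < 0
        have h2 := mul_le_mul_of_nonpos_right this hsw.le
        rw [div_mul_cancel₀ _ (pow_ne_zero 3 h.ne)] at h2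
        linarith
    have hint : ∫ s in w..(0:ℝ), φ w / w ^ 3 * s ^ 3 ≤ ∫ s in w..(0:ℝ), φ s := by
      refine intervalIntegral.integral_mono_on hw.le ?_ ?_ hle
      · exact (Continuous.intervalIntegrable (by continuity) w 0)
      · exact hcont.intervalIntegrable w 0
    have hval : ∫ s in w..(0:ℝ), φ w / w ^ 3 * s ^ 3 = φ w / w ^ 3 * ((0 ^ 4 - w ^ 4) / 4) := by
      rw [intervalIntegral.integral_const_mul, integral_pow]
      norm_num
    have hsym : (∫ s in (0:ℝ)..w, φ s) = -∫ s in w..(0:ℝ), φ s := by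
      rw [integral_symm]
    rw [hsym]
    have hval2 : φ w / w ^ 3 * ((0 ^ 4 - w ^ 4) / 4) = - (w * φ w) / 4 := by
      have he : φ w / w ^ 3 * ((0 ^ 4 - w ^ 4) / 4) = (φ w / w ^ 3 * w ^ 3) * (-w / 4) := by ring
      rw [he, div_mul_cancel₀ _ (pow_ne_zero 3 hw.ne)]
      ring
    nlinarith [hint]
  · simp [hw, hφ0]
  · -- 0 < w
    have hw3 : 0 < w ^ 3 := by positivity
    have hle : ∀ s ∈ Icc (0:ℝ) w, φ s ≤ φ w / w ^ 3 * s ^ 3 := by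
      intro s hs
      rcases eq_or_lt_of_le hs.1 with h | h
      · simp [← h, hφ0]
      · have := hmono (mem_Ioi.mpr h) (mem_Ioi.mpr hw) hs.2
        have h2 := mul_le_mul_of_nonneg_right this (by positivity : (0:ℝ) ≤ s ^ 3)
        rw [div_mul_cancel₀ _ (pow_ne_zero 3 h.ne')] at h2
        linarith
    have hint : ∫ s in (0:ℝ)..w, φ s ≤ ∫ s in (0:ℝ)..w, φ w / w ^ 3 * s ^ 3 := by
      refine intervalIntegral.integral_mono_on hw.le ?_ ?_ hle
      · exact hcont.intervalIntegrable 0 w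
      · exact (Continuous.intervalIntegrable (by continuity) 0 w)
    have hval : ∫ s in (0:ℝ)..w, φ w / w ^ 3 * s ^ 3 = φ w / w ^ 3 * ((w ^ 4 - 0 ^ 4) / 4) := by
      rw [intervalIntegral.integral_const_mul, integral_pow]
      norm_num
    have hval2 : φ w / w ^ 3 * ((w ^ 4 - 0 ^ 4) / 4) = w * φ w / 4 := by
      have he : φ w / w ^ 3 * ((w ^ 4 - 0 ^ 4) / 4) = (φ w / w ^ 3 * w ^ 3) * (w / 4) := by ring
      rw [he, div_mul_cancel₀ _ (pow_ne_zero 3 hw.ne')]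
      ring
    nlinarith [hint]

lemma scaling {φ : ℝ → ℝ} (hcont : Continuous φ) (hφ0 : φ 0 = 0)
    (hmono : MonotoneOn (fun s => φ s / s ^ 3) (Set.Ioi (0:ℝ)))
    (hanti : AntitoneOn (fun s => φ s / s ^ 3) (Set.Iio (0:ℝ)))
    (v t : ℝ) (ht : 0 < t) (ht1 : t ≤ 1) :
    (∫ s in (0:ℝ)..(t * v), φ s) ≤ t ^ 4 * ∫ s in (0:ℝ)..v, φ s := by
  rcases eq_or_lt_of_le ht1 with rfl | ht1
  · simp
  set G : ℝ → ℝ := fun y => ∫ s in (0:ℝ)..y, φ s with hG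
  have hGderiv : ∀ y : ℝ, HasDerivAt G (φ y) y := fun y =>
    (hcont.integral_hasStrictDerivAt 0 y).hasDerivAt
  have hGdiff : Differentiable ℝ G := fun y => (hGderiv y).differentiableAt
  have hGcont : Continuous G := hGdiff.continuous
  set q : ℝ → ℝ := fun r => G (r * v) / r ^ 4 with hq
  set q' : ℝ → ℝ := fun r => (φ (r * v) * v * r ^ 4 - G (r * v) * (4 * r ^ 3)) / (r ^ 4) ^ 2 with hq'
  have hqderiv : ∀ r ∈ Ioo t 1, HasDerivAt q (q' r) r := by
    intro r hr
    have hr0 : 0 < r := ht.trans hr.1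
    have hnum : HasDerivAt (fun r : ℝ => G (r * v)) (φ (r * v) * v) r :=
      by have := (hGderiv (r * v)).comp r (hasDerivAt_mul_const v); exact this
    have hden : HasDerivAt (fun r : ℝ => r ^ 4) (4 * r ^ 3) r := by
      simpa using hasDerivAt_pow 4 r
    exact hnum.div hden (pow_ne_zero 4 hr0.ne')
  have hqcont : ContinuousOn q (Icc t 1) := by
    apply ContinuousOn.div
    · exact (hGcont.comp (continuous_mul_right v)).continuousOn
    · exact (continuous_pow 4).continuousOn
    · intro r hr
      exact pow_ne_zero 4 (ht.trans_le hr.1).ne'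
  obtain ⟨ξ, hξ, hslope⟩ := exists_hasDerivAt_eq_slope q q' ht1 hqcont hqderiv
  have hξ0 : 0 < ξ := ht.trans hξ.1
  have hq'nonneg : 0 ≤ q' ξ := by
    have hKI := key_ineq hcont hφ0 hmono hanti (ξ * v)
    have hnum : 0 ≤ φ (ξ * v) * v * ξ ^ 4 - G (ξ * v) * (4 * ξ ^ 3) := by
      have h3 : (0:ℝ) < ξ ^ 3 := by positivity
      nlinarith [hKI]
    exact div_nonneg hnum (by positivity)
  have hqt : q t ≤ q 1 := by
    rw [hslope] at hq'nonneg
    have h1t : 0 < 1 - t := by linarith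
    have := (div_nonneg_iff.mp hq'nonneg)
    rcases this with h | h
    · linarith [h.1]
    · rcases eq_or_lt_of_le h.2 with he | he
      · linarith
      · linarith [h.1, he]
  have hq1 : q 1 = G v := by simp [hq]
  have hqt' : q t = G (t * v) / t ^ 4 := rfl
  rw [hq1, hqt'] at hqt
  have := (div_le_iff₀ (by positivity : (0:ℝ) < t ^ 4)).mp hqt
  linarith [this]

theorem palais_smale_sequences_bounded
    -- `X` plays the role of the Sobolev space `H¹₀(Ω)`, with `‖u‖² = ∫_Ω |∇u|²`,
    -- and `T u` is the function on `Ω` represented by `u ∈ X`.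
    {X : Type*} [NormedAddCommGroup X] [InnerProductSpace ℝ X] [CompleteSpace X]
    {N : ℕ} (hN : 1 ≤ N ∧ N ≤ 3)
    (Ω : Set (EuclideanSpace ℝ (Fin N)))
    (hΩopen : IsOpen Ω) (hΩbdd : Bornology.IsBounded Ω)
    (T : X →ₗ[ℝ] (EuclideanSpace ℝ (Fin N) → ℝ))
    (a b : ℝ) (ha : 0 < a) (hb : 0 < b)
    (f F : EuclideanSpace ℝ (Fin N) → ℝ → ℝ)
    (hF : ∀ x u, F x u = ∫ s in (0:ℝ)..u, f x s)
    (c p : ℝ) (hc : 0 < c) (hp : 4 < p) (hp3 : N = 3 → p < 6)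
    -- (f₁): continuity and subcritical growth
    (hf1 : Continuous fun q : EuclideanSpace ℝ (Fin N) × ℝ => f q.1 q.2)
    (hf1' : ∀ x ∈ closure Ω, ∀ u : ℝ, |f x u| ≤ c * (1 + |u| ^ (p - 1)))
    -- (f₂): f(x,u) = o(u) as u → 0, uniformly in x
    (hf2 : ∀ ε : ℝ, 0 < ε → ∃ δ : ℝ, 0 < δ ∧
      ∀ x ∈ closure Ω, ∀ u : ℝ, |u| ≤ δ → |f x u| ≤ ε * |u|)
    -- (f₃): F(x,u)/u⁴ → ∞ as |u| → ∞, uniformly in x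
    (hf3 : ∀ M : ℝ, ∃ R : ℝ, 0 < R ∧
      ∀ x ∈ closure Ω, ∀ u : ℝ, R ≤ |u| → M ≤ F x u / u ^ 4)
    -- (f₄): u ↦ f(x,u)/u³ positive for u ≠ 0, nonincreasing on (−∞,0),
    -- nondecreasing on (0,∞)
    (hf4pos : ∀ x ∈ closure Ω, ∀ u : ℝ, u ≠ 0 → 0 < f x u / u ^ 3)
    (hf4mono : ∀ x ∈ closure Ω,
      MonotoneOn (fun u => f x u / u ^ 3) (Set.Ioi (0:ℝ)))
    (hf4anti : ∀ x ∈ closure Ω,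
      AntitoneOn (fun u => f x u / u ^ 3) (Set.Iio (0:ℝ)))
    -- the energy functional
    (Φ : X → ℝ)
    (hΦ : ∀ u : X, Φ u = a / 2 * ‖u‖ ^ 2 + b / 4 * ‖u‖ ^ 4
      - ∫ x in Ω, F x (T u x))
    (Φ' : X → X →L[ℝ] ℝ) (hΦ' : ∀ u : X, HasFDerivAt Φ (Φ' u) u) :
    ∀ u : ℕ → X, (∀ n, u n ≠ 0 ∧ Φ' (u n) (u n) = 0) →
      (∃ d : ℝ, ∀ n, Φ (u n) ≤ d) →
      Filter.Tendsto (fun n => ‖Φ' (u n)‖) Filter.atTop (nhds 0) →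
      ∃ C : ℝ, ∀ n, ‖u n‖ ≤ C := by
  intro u hNehari ⟨d, hd⟩ _
  have hΩmeas : MeasurableSet Ω := hΩopen.measurableSet
  -- pointwise facts
  have hfx0 : ∀ x ∈ closure Ω, f x 0 = 0 := by
    intro x hx
    obtain ⟨δ, hδ, h⟩ := hf2 1 one_pos
    have h0 := h x hx 0 (by simpa using hδ.le)
    rw [abs_zero, mul_zero] at h0
    exact abs_eq_zero.mp (le_antisymm h0 (abs_nonneg _))
  have hfxc : ∀ x : EuclideanSpace ℝ (Fin N), Continuous (f x) :=
    fun x => hf1.comp (Continuous.prodMk_right x)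
  have hFnn : ∀ x ∈ closure Ω, ∀ v : ℝ, 0 ≤ F x v := by
    intro x hx v
    rw [hF]
    exact F_nonneg (hf4pos x hx) (hfx0 x hx) v
  have hFscale : ∀ x ∈ closure Ω, ∀ v : ℝ, ∀ t : ℝ, 0 < t → t ≤ 1 →
      F x (t * v) ≤ t ^ 4 * F x v := by
    intro x hx v t ht ht1
    rw [hF, hF]
    exact scaling (hfxc x) (hfx0 x hx) (hf4mono x hx) (hf4anti x hx) v t ht ht1
  -- the key bound for every element of the Nehari manifold
  have hkey : ∀ n, a / 4 * ‖u n‖ ^ 2 ≤ Φ (u n) := by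
    intro n
    obtain ⟨hw0, hne⟩ := hNehari n
    set w := u n with hw
    set A := ‖w‖ ^ 2 with hA
    set B := ‖w‖ ^ 4 with hB
    set G : ℝ → ℝ := fun t => a / 2 * t ^ 2 * A + b / 4 * t ^ 4 * B - Φ (t • w)
      with hGdef
    have hrepr : ∀ t : ℝ, G t = ∫ x in Ω, F x (t * T w x) := by
      intro t
      have h1 := hΦ (t • w)
      have habs2 : |t| ^ 2 = t ^ 2 := sq_abs t
      have habs4 : |t| ^ 4 = t ^ 4 := by
        rw [show (4:ℕ) = 2 * 2 from rfl, pow_mul, pow_mul, habs2]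
      have h2 : ‖t • w‖ ^ 2 = t ^ 2 * A := by
        rw [norm_smul, mul_pow, Real.norm_eq_abs, habs2, hA]
      have h4 : ‖t • w‖ ^ 4 = t ^ 4 * B := by
        rw [norm_smul, mul_pow, Real.norm_eq_abs, habs4, hB]
      have hT : ∀ x, T (t • w) x = t * T w x := by
        intro x
        rw [LinearMap.map_smul]
        rfl
      simp only [hT] at h1
      rw [h2, h4] at h1
      simp only [hGdef]
      rw [h1]; ring
    have hGnn : ∀ t : ℝ, 0 ≤ G t := by
      intro t
      rw [hrepr t]
      exact setIntegral_nonneg hΩmeas fun x hx => hFnn x (subset_closure hx) _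
    have hG1 : G 1 = a / 2 * A + b / 4 * B - Φ w := by
      simp only [hGdef, one_pow, one_smul]; ring_nf
    -- derivative of G at 1
    have hc1 : HasDerivAt (fun t : ℝ => t • w) w 1 := by
      have := (hasDerivAt_id (1:ℝ)).smul_const w
      simpa using this
    have hfd : HasFDerivAt Φ (Φ' w) ((1:ℝ) • w) := by rw [one_smul]; exact hΦ' w
    have hPhiD : HasDerivAt (fun t : ℝ => Φ (t • w)) (Φ' w w) 1 :=
      hfd.comp_hasDerivAt 1 hc1
    have hpoly1 : HasDerivAt (fun t : ℝ => a / 2 * t ^ 2 * A) (a * A) 1 := by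
      have h := ((hasDerivAt_pow 2 (1:ℝ)).const_mul (a / 2)).mul_const A
      refine h.congr_deriv ?_
      push_cast; ring
    have hpoly2 : HasDerivAt (fun t : ℝ => b / 4 * t ^ 4 * B) (b * B) 1 := by
      have h := ((hasDerivAt_pow 4 (1:ℝ)).const_mul (b / 4)).mul_const B
      refine h.congr_deriv ?_
      push_cast; ring
    have hGd : HasDerivAt G (a * A + b * B) 1 := by
      have h := (hpoly1.add hpoly2).sub hPhiD
      rw [hne, sub_zero] at h
      exact h
    -- G 1 ≤ (a*A + b*B)/4
    have hABnn : 0 ≤ a * A + b * B := by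
      have : (0:ℝ) ≤ A := by positivity
      have : (0:ℝ) ≤ B := by positivity
      positivity
    clear_value G A B
    have hkey1 : 4 * G 1 ≤ a * A + b * B := by
      by_cases h1 : IntegrableOn (fun x => F x (T w x)) Ω volume
      · -- scaling inequality for G
        have hscaleG : ∀ t ∈ Ioo (0:ℝ) 1, G t ≤ t ^ 4 * G 1 := by
          intro t ht
          rw [hrepr t, hrepr 1]
          simp only [one_mul]
          by_cases h2 : IntegrableOn (fun x => F x (t * T w x)) Ω volume
          · calc (∫ x in Ω, F x (t * T w x))
                ≤ ∫ x in Ω, t ^ 4 * F x (T w x) := by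
                  refine setIntegral_mono_on h2 (h1.const_mul _) hΩmeas fun x hx => ?_
                  exact hFscale x (subset_closure hx) _ t ht.1 ht.2.le
              _ = t ^ 4 * ∫ x in Ω, F x (T w x) := by
                  rw [MeasureTheory.integral_const_mul]
          · rw [integral_undef h2]
            have : 0 ≤ ∫ x in Ω, F x (T w x) :=
              setIntegral_nonneg hΩmeas fun x hx => hFnn x (subset_closure hx) _
            positivity
        have hmem : Ioo (0:ℝ) 1 ∈ 𝓝[<] (1:ℝ) :=
          Ioo_mem_nhdsLT_of_mem (by constructor <;> norm_num)
        have hslope_t : Tendsto (slope G 1) (𝓝[<] (1:ℝ)) (𝓝 (a * A + b * B)) := by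
          refine (hasDerivAt_iff_tendsto_slope.mp hGd).mono_left
            (nhdsWithin_mono _ fun x hx => ?_)
          exact ne_of_lt hx
        have hlim2 : Tendsto (fun t : ℝ => (1 + t + t ^ 2 + t ^ 3) * G 1)
            (𝓝[<] (1:ℝ)) (𝓝 (4 * G 1)) := by
          have hcont : ContinuousAt (fun t : ℝ => (1 + t + t ^ 2 + t ^ 3) * G 1) 1 := by
            fun_prop
          have h := hcont.tendsto
          have : ((1:ℝ) + 1 + 1 ^ 2 + 1 ^ 3) * G 1 = 4 * G 1 := by norm_num
          rw [this] at h
          exact h.mono_left nhdsWithin_le_nhds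
        have hev : ∀ᶠ t in 𝓝[<] (1:ℝ),
            (1 + t + t ^ 2 + t ^ 3) * G 1 ≤ slope G 1 t := by
          refine eventually_of_mem hmem fun t ht => ?_
          have ht1 : t - 1 < 0 := by linarith [ht.2]
          rw [slope_def_field]
          rw [le_div_iff_of_neg ht1]
          have hTT : (1 + t + t ^ 2 + t ^ 3) * G 1 * (t - 1) = t ^ 4 * G 1 - G 1 := by
            ring
          rw [hTT]
          linarith [hscaleG t ht]
        exact le_of_tendsto_of_tendsto hlim2 hslope_t hev
      · have : G 1 = 0 := by
          rw [hrepr 1]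
          simp only [one_mul]
          exact integral_undef h1
        rw [this]
        linarith
    -- conclude
    have hPw : Φ w = a / 2 * A + b / 4 * B - G 1 := by rw [hG1]; ring
    rw [hPw]
    nlinarith [hkey1]
  refine ⟨Real.sqrt (4 * d / a), fun n => ?_⟩
  have h1 : a / 4 * ‖u n‖ ^ 2 ≤ d := le_trans (hkey n) (hd n)
  have h2 : ‖u n‖ ^ 2 ≤ 4 * d / a := by
    rw [le_div_iff₀ ha]
    linarith
  calc ‖u n‖ = Real.sqrt (‖u n‖ ^ 2) := (Real.sqrt_sq (norm_nonneg _)).symm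
    _ ≤ Real.sqrt (4 * d / a) := Real.sqrt_le_sqrt h2
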